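/- Let Γ_i = (V_i, E_i) for 1 ≤ i ≤ l be graphs, at least one of which is bipartite, each equipped with a strong edge coloring E_i using colors from S_i. Then the tensor product Γ1 × ⋯ × Γl is bipartite, and E = {((x1,...,xl),(y1,...,yl),(s1,...,sl)) : (x_i,y_i,s_i) ∈ E_i for each i} is a strong edge coloring of the tensor product with colors from S1 × ⋯ × Sl. -/

import Mathlib

/-- A strong edge coloring of a (general, undirected) simple graph `G`, with
colors from `Cols`, encoded symmetrically as triples `(x, y, s)`. -/
def IsStrongEdgeColoringSGOn {V S : Type*} (G : SimpleGraph V) (Cols : Set S)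
    (C : Set (V × V × S)) : Prop :=
  (∀ x y s, (x, y, s) ∈ C → G.Adj x y ∧ s ∈ Cols) ∧
  (∀ x y s, (x, y, s) ∈ C → (y, x, s) ∈ C) ∧
  (∀ s ∈ Cols, ∃ x y, (x, y, s) ∈ C) ∧
  (∀ x y, G.Adj x y → ∃! s, (x, y, s) ∈ C) ∧
  (∀ x y s x' y', (x, y, s) ∈ C → (x', y', s) ∈ C →
    ¬((x = x' ∧ y = y') ∨ (x = y' ∧ y = x')) →
    x ≠ x' ∧ x ≠ y' ∧ y ≠ x' ∧ y ≠ y' ∧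
    ¬G.Adj x x' ∧ ¬G.Adj x y' ∧ ¬G.Adj y x' ∧ ¬G.Adj y y')

/-- A graph is bipartite when its vertex set splits into two parts with all
edges between the parts. -/
def IsBipartiteSG {V : Type*} (G : SimpleGraph V) : Prop :=
  ∃ A : Set V, ∀ x y, G.Adj x y → ((x ∈ A ∧ y ∉ A) ∨ (x ∉ A ∧ y ∈ A))

/-- The tensor product of a family of graphs: vertices are tuples, and two
tuples are adjacent when they are adjacent in every coordinate. -/
def tensorProd {ι : Type*} [Nonempty ι] {V : ι → Type*}
    (G : ∀ i, SimpleGraph (V i)) : SimpleGraph (∀ i, V i) where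
  Adj x y := ∀ i, (G i).Adj (x i) (y i)
  symm := ⟨by intro x y h i; exact (h i).symm⟩
  loopless := ⟨by intro x h; exact (G (Classical.arbitrary ι)).irrefl (h _)⟩

/-- If `Γ_i`, `1 ≤ i ≤ l`, are graphs, at least one of which is bipartite, each
with a strong edge coloring `C i` using colors from `S i`, then the tensor
product is bipartite and the product coloring is a strong edge coloring of it
with colors from `∏ S i`. -/
theorem tensorProd_strongEdgeColoring {ι : Type*} [Nonempty ι]
    {V : ι → Type*} {S : ι → Type*}
    (G : ∀ i, SimpleGraph (V i)) (C : ∀ i, Set (V i × V i × S i))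
    (hC : ∀ i, IsStrongEdgeColoringSGOn (G i) Set.univ (C i))
    (hbip : ∃ i, IsBipartiteSG (G i)) :
    IsBipartiteSG (tensorProd G) ∧
      IsStrongEdgeColoringSGOn (tensorProd G) Set.univ
        {t : (∀ i, V i) × (∀ i, V i) × (∀ i, S i) |
          ∀ i, (t.1 i, t.2.1 i, t.2.2 i) ∈ C i} := by
  obtain ⟨i0, A, hA⟩ := hbip
  constructor
  · exact ⟨{x | x i0 ∈ A}, fun x y h => hA _ _ (h i0)⟩
  refine ⟨?_, ?_, ?_, ?_, ?_⟩
  · intro x y s h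
    exact ⟨fun i => ((hC i).1 _ _ _ (h i)).1, trivial⟩
  · intro x y s h i
    exact (hC i).2.1 _ _ _ (h i)
  · intro s _
    choose x y hxy using fun i => (hC i).2.2.1 (s i) trivial
    exact ⟨x, y, hxy⟩
  · intro x y hxy
    have h := fun i => (hC i).2.2.2.1 _ _ (hxy i)
    refine ⟨fun i => (h i).choose, fun i => (h i).choose_spec.1, ?_⟩
    intro s hs
    funext i
    exact (h i).choose_spec.2 _ (hs i)
  · intro x y s x' y' h h' hne
    by_cases hall : ∀ i, (x i = x' i ∧ y i = y' i) ∨ (x i = y' i ∧ y i = x' i)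
    · -- mixed case: some coordinate aligns one way, another the other way
      have hnedge : ∀ i, x' i ≠ y' i := fun i => ((hC i).1 _ _ _ (h' i)).1.ne
      have h1 : ∃ j, x j = y' j ∧ y j = x' j := by
        by_contra hc
        push_neg at hc
        refine hne (Or.inl ⟨funext fun i => ?_, funext fun i => ?_⟩) <;>
          rcases hall i with hi | hi
        · exact hi.1
        · exact absurd hi.2 (hc i hi.1)
        · exact hi.2
        · exact absurd hi.2 (hc i hi.1)
      have h2 : ∃ k, x k = x' k ∧ y k = y' k := by
        by_contra hc
        push_neg at hc
        refine hne (Or.inr ⟨funext fun i => ?_, funext fun i => ?_⟩) <;>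
          rcases hall i with hi | hi
        · exact absurd hi.2 (hc i hi.1)
        · exact hi.1
        · exact absurd hi.2 (hc i hi.1)
        · exact hi.2
      obtain ⟨j, hj1, hj2⟩ := h1
      obtain ⟨k, hk1, hk2⟩ := h2
      refine ⟨?_, ?_, ?_, ?_, ?_, ?_, ?_, ?_⟩
      · intro he; exact hnedge j ((congrFun he j).symm.trans hj1)
      · intro he; exact hnedge k (hk1.symm.trans (congrFun he k))
      · intro he; exact hnedge k ((congrFun he k).symm.trans hk2)
      · intro he; exact hnedge j (hj2.symm.trans (congrFun he j))
      · intro ha; exact (G k).loopless.irrefl _ (hk1 ▸ ha k)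
      · intro ha; exact (G j).loopless.irrefl _ (hj1 ▸ ha j)
      · intro ha; exact (G j).loopless.irrefl _ (hj2 ▸ ha j)
      · intro ha; exact (G k).loopless.irrefl _ (hk2 ▸ ha k)
    · push_neg at hall
      obtain ⟨i, hi⟩ := hall
      have hs := (hC i).2.2.2.2 _ _ _ _ _ (h i) (h' i) (by tauto)
      exact ⟨fun he => hs.1 (congrFun he i), fun he => hs.2.1 (congrFun he i),
        fun he => hs.2.2.1 (congrFun he i), fun he => hs.2.2.2.1 (congrFun he i),
        fun ha => hs.2.2.2.2.1 (ha i), fun ha => hs.2.2.2.2.2.1 (ha i),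
        fun ha => hs.2.2.2.2.2.2.1 (ha i), fun ha => hs.2.2.2.2.2.2.2 (ha i)⟩
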